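/- Let G be a finite simple graph with vertex set V and let S be a set of edges of G. Define the 2-lift Ĝ on vertex set V × {0, 1} by making (u, i) adjacent to (v, j) if and only if uv is an edge of G and either uv ∉ S and j = i, or uv ∈ S and j ≠ i. Let A⁻ be the matrix obtained from the adjacency matrix A of G by replacing the (u,v)- and (v,u)-entries by −1 for every edge uv ∈ S. Then the multiset of adjacency eigenvalues of Ĝ (with multiplicity) is the multiset union of the eigenvalues of A and the eigenvalues of A⁻; equivalently, the characteristic polynomial of the adjacency matrix of Ĝ is the product of the characteristic polynomials of A and A⁻. -/

import Mathlib

open Polynomial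

/-- The 2-lift of `G` determined by a set of edges `S`: vertex `(u, i)` is adjacent to
`(v, j)` iff `uv` is an edge of `G` and either `uv ∉ S` and `j = i`, or `uv ∈ S` and
`j ≠ i`. -/
def twoLift {V : Type*} (G : SimpleGraph V) (S : Set (Sym2 V)) :
    SimpleGraph (V × Bool) where
  Adj p q := G.Adj p.1 q.1 ∧
    ((s(p.1, q.1) ∉ S ∧ q.2 = p.2) ∨ (s(p.1, q.1) ∈ S ∧ q.2 ≠ p.2))
  symm := by
    constructor
    rintro ⟨u, i⟩ ⟨v, j⟩ ⟨hadj, h⟩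
    refine ⟨hadj.symm, ?_⟩
    rw [Sym2.eq_swap] at h
    rcases h with ⟨hS, hj⟩ | ⟨hS, hj⟩
    · exact Or.inl ⟨hS, hj.symm⟩
    · exact Or.inr ⟨hS, Ne.symm hj⟩
  loopless := by
    constructor
    rintro ⟨u, i⟩ ⟨hadj, -⟩
    exact (G.ne_of_adj hadj) rfl

/-- Determinant of a block matrix `[[B, C], [C, B]]`. -/
lemma det_fromBlocks_symm {n : Type*} [Fintype n] [DecidableEq n] {R : Type*} [CommRing R]
    (B C : Matrix n n R) :
    (Matrix.fromBlocks B C C B).det = (B + C).det * (B - C).det := by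
  have key : Matrix.fromBlocks (1 : Matrix n n R) 1 0 1 * Matrix.fromBlocks B C C B *
      Matrix.fromBlocks (1 : Matrix n n R) (-1) 0 1 =
      Matrix.fromBlocks (B + C) 0 C (B - C) := by
    have e1 : -(B + C) + (C + B) = (0 : Matrix n n R) := by abel
    have e2 : -C + B = B - C := by abel
    simp only [Matrix.fromBlocks_multiply, Matrix.mul_one, Matrix.one_mul,
      Matrix.mul_zero, Matrix.zero_mul, Matrix.mul_neg, add_zero, zero_add, e1, e2]
  have hdet := congrArg Matrix.det key
  rw [Matrix.det_mul, Matrix.det_mul, Matrix.det_fromBlocks_zero₂₁,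
    Matrix.det_fromBlocks_zero₂₁, Matrix.det_fromBlocks_zero₁₂] at hdet
  simpa using hdet

/-- (Bilu–Linial) Let `G` be a finite simple graph and `S` a set of edges of `G`. Let `Ĝ`
be the 2-lift of `G` determined by `S`, and let `A⁻` be the signed adjacency matrix of `G`
in which the entries corresponding to the edges of `S` are replaced by `-1`. Then the
characteristic polynomial of the adjacency matrix of `Ĝ` is the product of the
characteristic polynomials of the adjacency matrix `A` of `G` and of `A⁻`; equivalently,
the spectrum of `Ĝ` (with multiplicity) is the multiset union of the spectra of `A` and
`A⁻`. -/
theorem charpoly_twoLift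
    {V : Type} [Fintype V] [DecidableEq V] (G : SimpleGraph V) [DecidableRel G.Adj]
    (S : Set (Sym2 V)) [DecidablePred (· ∈ S)] (hS : S ⊆ G.edgeSet)
    (Aminus : Matrix V V ℝ)
    (hAminus : ∀ u v, Aminus u v =
      if G.Adj u v then (if s(u, v) ∈ S then -1 else 1) else 0) :
    letI : DecidableRel (twoLift G S).Adj := Classical.decRel _
    ((twoLift G S).adjMatrix ℝ).charpoly = (G.adjMatrix ℝ).charpoly * Aminus.charpoly := by
  letI : DecidableRel (twoLift G S).Adj := Classical.decRel _
  show ((twoLift G S).adjMatrix ℝ).charpoly = (G.adjMatrix ℝ).charpoly * Aminus.charpoly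
  -- The two "pieces" of the adjacency matrix: non-flipped and flipped edges.
  set A₀ : Matrix V V ℝ :=
    Matrix.of fun u v => if G.Adj u v ∧ s(u, v) ∉ S then 1 else 0 with hA₀
  set A₁ : Matrix V V ℝ :=
    Matrix.of fun u v => if G.Adj u v ∧ s(u, v) ∈ S then 1 else 0 with hA₁
  -- The equivalence sending `(v, false)` to `inl v` and `(v, true)` to `inr v`.
  let e : V × Bool ≃ V ⊕ V := (Equiv.prodComm V Bool).trans (Equiv.boolProdEquivSum V)
  have hreindex : Matrix.reindex e e ((twoLift G S).adjMatrix ℝ) =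
      Matrix.fromBlocks A₀ A₁ A₁ A₀ := by
    ext i j
    rcases i with u | u <;> rcases j with v | v <;>
      simp [e, Matrix.reindex_apply, Equiv.boolProdEquivSum,
        SimpleGraph.adjMatrix_apply, A₀, A₁] <;> simp [twoLift]
  have hsum : A₀ + A₁ = G.adjMatrix ℝ := by
    ext u v
    by_cases h : G.Adj u v <;> by_cases h' : s(u, v) ∈ S <;>
      simp [A₀, A₁, h, h', SimpleGraph.adjMatrix_apply]
  have hdiff : A₀ - A₁ = Aminus := by
    ext u v
    rw [hAminus u v]
    by_cases h : G.Adj u v <;> by_cases h' : s(u, v) ∈ S <;>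
      simp [A₀, A₁, h, h']
  clear_value A₀ A₁
  calc ((twoLift G S).adjMatrix ℝ).charpoly
      = (Matrix.reindex e e ((twoLift G S).adjMatrix ℝ)).charpoly :=
        (Matrix.charpoly_reindex e _).symm
    _ = (Matrix.fromBlocks A₀ A₁ A₁ A₀).charpoly := by rw [hreindex]
    _ = (G.adjMatrix ℝ).charpoly * Aminus.charpoly := by
        rw [Matrix.charpoly, Matrix.charmatrix_fromBlocks,
          det_fromBlocks_symm]
        have h1 : A₀.charmatrix + -A₁.map C = (A₀ + A₁).charmatrix := by
          ext u v
          simp [Matrix.charmatrix_apply, Matrix.map_apply]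
          ring
        have h2 : A₀.charmatrix - -A₁.map C = (A₀ - A₁).charmatrix := by
          ext u v
          simp [Matrix.charmatrix_apply, Matrix.map_apply]
          ring
        rw [h1, h2, hsum, hdiff]
        rfl
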